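/- Let G be a bipartite graph over vertex bipartition A ∪ B in which every vertex of A has degree exactly 2. Then there exists a subset of B dominating A of size at most (|A|+|B|)/3. -/

import Mathlib

open Finset

lemma cover_lemma {V : Type*} [DecidableEq V] :
    ∀ (n : ℕ) (P : Finset (Finset V)) (B : Finset V), P.card ≤ n →
      (∀ p ∈ P, p ⊆ B ∧ p.card = 2) →
      ∃ S : Finset V, S ⊆ B ∧ (∀ p ∈ P, ∃ x ∈ S, x ∈ p) ∧
        3 * S.card ≤ B.card + P.card := by
  intro n
  induction n with
  | zero =>
      intro P B hPn _
      have : P = ∅ := card_eq_zero.mp (Nat.le_zero.mp hPn)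
      subst this
      exact ⟨∅, empty_subset _, by simp, by simp⟩
  | succ n ih =>
      intro P B hPn hP
      rcases P.eq_empty_or_nonempty with rfl | ⟨p₀, hp₀⟩
      · exact ⟨∅, empty_subset _, by simp, by simp⟩
      by_cases hA : ∃ v ∈ B, 2 ≤ (P.filter (fun p => v ∈ p)).card
      · obtain ⟨v, hvB, hv2⟩ := hA
        set Pv := P.filter (fun p => v ∉ p) with hPv
        have hsplit : (P.filter (fun p => v ∈ p)).card + Pv.card = P.card :=
          P.card_filter_add_card_filter_not _
        have hPvcard : Pv.card ≤ n := by omega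
        obtain ⟨S', hS'B, hS'cov, hS'card⟩ := ih Pv (B.erase v) hPvcard (by
          intro p hp
          have hp' := mem_filter.mp hp
          obtain ⟨hsub, hc⟩ := hP p hp'.1
          refine ⟨fun x hx => mem_erase.mpr ⟨?_, hsub hx⟩, hc⟩
          rintro rfl; exact hp'.2 hx)
        refine ⟨insert v S', ?_, ?_, ?_⟩
        · intro x hx
          rcases mem_insert.mp hx with rfl | hx
          · exact hvB
          · exact erase_subset _ _ (hS'B hx)
        · intro p hp
          by_cases hvp : v ∈ p
          · exact ⟨v, mem_insert_self _ _, hvp⟩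
          · obtain ⟨x, hxS, hxp⟩ := hS'cov p (mem_filter.mpr ⟨hp, hvp⟩)
            exact ⟨x, mem_insert_of_mem hxS, hxp⟩
        · have h1 : (insert v S').card ≤ S'.card + 1 := card_insert_le _ _
          have h2 : (B.erase v).card = B.card - 1 := card_erase_of_mem hvB
          have hB1 : 1 ≤ B.card := card_pos.mpr ⟨v, hvB⟩
          omega
      · push_neg at hA
        obtain ⟨hsubB, hc2⟩ := hP p₀ hp₀
        have hp₀ne : p₀.Nonempty := card_pos.mp (by omega)
        obtain ⟨v, hvp₀⟩ := hp₀ne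
        have key : ∀ p ∈ P, p ≠ p₀ → ∀ w ∈ p₀, w ∉ p := by
          intro p hp hne w hwp₀ hwp
          have hwB : w ∈ B := hsubB hwp₀
          have h1 : (P.filter (fun p => w ∈ p)).card ≤ 1 := Nat.lt_succ_iff.mp (hA w hwB)
          exact hne (card_le_one.mp h1 p (mem_filter.mpr ⟨hp, hwp⟩)
            p₀ (mem_filter.mpr ⟨hp₀, hwp₀⟩))
        have hP'card : (P.erase p₀).card = P.card - 1 := card_erase_of_mem hp₀
        obtain ⟨S', hS'B, hS'cov, hS'card⟩ := ih (P.erase p₀) (B \ p₀) (by omega) (by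
          intro p hp
          have hpP := mem_of_mem_erase hp
          have hne := ne_of_mem_erase hp
          obtain ⟨hsub, hc⟩ := hP p hpP
          exact ⟨fun x hx => mem_sdiff.mpr ⟨hsub hx,
            fun hxp₀ => key p hpP hne x hxp₀ hx⟩, hc⟩)
        refine ⟨insert v S', ?_, ?_, ?_⟩
        · intro x hx
          rcases mem_insert.mp hx with rfl | hx
          · exact hsubB hvp₀
          · exact sdiff_subset (hS'B hx)
        · intro p hp
          by_cases hne : p = p₀
          · exact ⟨v, mem_insert_self _ _, hne ▸ hvp₀⟩
          · obtain ⟨x, hxS, hxp⟩ := hS'cov p (mem_erase.mpr ⟨hne, hp⟩)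
            exact ⟨x, mem_insert_of_mem hxS, hxp⟩
        · have h1 : (insert v S').card ≤ S'.card + 1 := card_insert_le _ _
          have h2 : (B \ p₀).card = B.card - p₀.card := card_sdiff_of_subset hsubB
          have hB2 : p₀.card ≤ B.card := card_le_card hsubB
          have hPpos : 1 ≤ P.card := card_pos.mpr ⟨p₀, hp₀⟩
          omega

/-- In a bipartite graph over `A ∪ B` in which every vertex of
`A` has degree exactly 2, some subset of `B` of size at most `(|A| + |B|) / 3`
dominates `A`. -/
theorem bipartite_dominating_set {V : Type*} [Fintype V] (G : SimpleGraph V)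
    (A B : Set V) (hdisj : Disjoint A B) (hcover : A ∪ B = Set.univ)
    (hbip : ∀ u v, G.Adj u v → (u ∈ A ∧ v ∈ B) ∨ (u ∈ B ∧ v ∈ A))
    (hdeg : ∀ a ∈ A, {v | G.Adj a v}.ncard = 2) :
    ∃ S ⊆ B, (∀ a ∈ A, ∃ b ∈ S, G.Adj a b) ∧
      (S.ncard : ℝ) ≤ ((A.ncard : ℝ) + (B.ncard : ℝ)) / 3 := by
  classical
  set nbr : V → Finset V := fun a => (Set.toFinite {v | G.Adj a v}).toFinset with hnbr
  have hnbr_mem : ∀ a x, x ∈ nbr a ↔ G.Adj a x := by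
    intro a x; simp [hnbr, Set.Finite.mem_toFinset]
  set FA := (Set.toFinite A).toFinset with hFA
  set FB := (Set.toFinite B).toFinset with hFB
  set P := FA.image nbr with hPdef
  have hPhyp : ∀ p ∈ P, p ⊆ FB ∧ p.card = 2 := by
    intro p hp
    obtain ⟨a, haFA, rfl⟩ := mem_image.mp hp
    have haA : a ∈ A := (Set.Finite.mem_toFinset _).mp haFA
    constructor
    · intro x hx
      have hadj : G.Adj a x := (hnbr_mem a x).mp hx
      rcases hbip a x hadj with ⟨_, hxB⟩ | ⟨haB, _⟩
      · exact (Set.Finite.mem_toFinset _).mpr hxB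
      · exact absurd haB (Set.disjoint_left.mp hdisj haA)
    · have := hdeg a haA
      rwa [Set.ncard_eq_toFinset_card _ (Set.toFinite _)] at this
  obtain ⟨S, hSB, hScov, hScard⟩ := cover_lemma P.card P FB le_rfl hPhyp
  refine ⟨(↑S : Set V), ?_, ?_, ?_⟩
  · intro x hx
    exact (Set.Finite.mem_toFinset _).mp (hSB hx)
  · intro a haA
    have haFA : a ∈ FA := (Set.Finite.mem_toFinset _).mpr haA
    obtain ⟨x, hxS, hxp⟩ := hScov (nbr a) (mem_image_of_mem nbr haFA)
    exact ⟨x, hxS, (hnbr_mem a x).mp hxp⟩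
  · have hPA : P.card ≤ FA.card := card_image_le
    have hAcard : A.ncard = FA.card := Set.ncard_eq_toFinset_card _ (Set.toFinite _)
    have hBcard : B.ncard = FB.card := Set.ncard_eq_toFinset_card _ (Set.toFinite _)
    have hScard' : (↑S : Set V).ncard = S.card := Set.ncard_coe_finset S
    have hfinal : 3 * S.card ≤ A.ncard + B.ncard := by omega
    rw [hScard']
    have := (Nat.cast_le (α := ℝ)).mpr hfinal
    push_cast at this ⊢
    linarith
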